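/- For density operators σ, ρ with supp σ ≤ supp ρ = p, the commutant Radon–Nikodym derivative d = ρ^{-1/2} σ ρ^{-1/2} is the unique element of pAp satisfying Tr(σ a) = Tr(ρ^{1/2} d ρ^{1/2} a) for all a ∈ A; moreover d ≥ 0, and ‖d‖ is the smallest λ ≥ 0 such that σ ≤ λρ. Consequently ‖d‖ ≥ 1, with equality if and only if σ = ρ. -/

import Mathlib

open Matrix ComplexOrder

namespace Matrix.PosSemidef

/-- The positive semidefinite square root of a positive semidefinite matrix
(the definition `Matrix.PosSemidef.sqrt` of the older Mathlib, since removed). -/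
noncomputable def sqrt {𝕜 : Type*} [RCLike 𝕜] {n : Type*} [Fintype n] [DecidableEq n]
    {A : Matrix n n 𝕜} (hA : A.PosSemidef) : Matrix n n 𝕜 :=
  hA.1.eigenvectorUnitary.1 * diagonal ((↑) ∘ (√·) ∘ hA.1.eigenvalues) *
    (star hA.1.eigenvectorUnitary : Matrix n n 𝕜)

end Matrix.PosSemidef

namespace Matrix.PosSemidef

lemma posSemidef_sqrt {𝕜 : Type*} [RCLike 𝕜] {n : Type*} [Fintype n] [DecidableEq n]
    {A : Matrix n n 𝕜} (hA : A.PosSemidef) : hA.sqrt.PosSemidef := by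
  rw [sqrt, Matrix.star_eq_conjTranspose]
  refine (posSemidef_diagonal_iff.mpr fun i => ?_).mul_mul_conjTranspose_same _
  simp only [Function.comp_apply]
  exact RCLike.ofReal_nonneg.mpr (Real.sqrt_nonneg _)

lemma sqrt_mul_self {𝕜 : Type*} [RCLike 𝕜] {n : Type*} [Fintype n] [DecidableEq n]
    {A : Matrix n n 𝕜} (hA : A.PosSemidef) : hA.sqrt * hA.sqrt = A := by
  have hU : (star hA.1.eigenvectorUnitary : Matrix n n 𝕜) * hA.1.eigenvectorUnitary.1 = 1 :=
    Unitary.coe_star_mul_self _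
  conv_rhs => rw [hA.1.spectral_theorem, Unitary.conjStarAlgAut_apply]
  rw [sqrt]
  set U : Matrix n n 𝕜 := hA.1.eigenvectorUnitary.1
  set V : Matrix n n 𝕜 := (star hA.1.eigenvectorUnitary : Matrix n n 𝕜)
  set D : Matrix n n 𝕜 := diagonal ((↑) ∘ (√·) ∘ hA.1.eigenvalues)
  rw [show U * D * V * (U * D * V) = U * (D * (V * U) * D) * V by simp only [mul_assoc], hU,
    mul_one, diagonal_mul_diagonal]
  refine congrArg (· * V) (congrArg (U * ·) (congrArg diagonal (funext fun i => ?_)))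
  simp only [Function.comp_apply]
  rw [← RCLike.ofReal_mul, Real.mul_self_sqrt (hA.eigenvalues_nonneg i)]

end Matrix.PosSemidef

lemma aux_trace_nonneg {n : Type*} [Fintype n] {M : Matrix n n ℂ}
    (hM : M.PosSemidef) : 0 ≤ M.trace := by
  classical
  obtain ⟨B, rfl⟩ : ∃ B : Matrix n n ℂ, M = Bᴴ * B := by
    open scoped MatrixOrder in
    exact CStarAlgebra.nonneg_iff_eq_star_mul_self.mp hM.nonneg
  rw [Matrix.trace]
  refine Finset.sum_nonneg fun i _ => ?_
  simp only [Matrix.diag_apply, Matrix.mul_apply, Matrix.conjTranspose_apply]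
  exact Finset.sum_nonneg fun j _ => star_mul_self_nonneg _

lemma aux_trace_zero {n : Type*} [Fintype n] {M : Matrix n n ℂ}
    (hM : M.PosSemidef) (h : M.trace = 0) : M = 0 := by
  classical
  obtain ⟨B, rfl⟩ : ∃ B : Matrix n n ℂ, M = Bᴴ * B := by
    open scoped MatrixOrder in
    exact CStarAlgebra.nonneg_iff_eq_star_mul_self.mp hM.nonneg
  suffices hB : B = 0 by simp [hB]
  have h' : ∑ i, ∑ j, star (B j i) * B j i = 0 := by
    rw [Matrix.trace] at h
    simpa [Matrix.diag_apply, Matrix.mul_apply, Matrix.conjTranspose_apply] using h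
  have hz : ∀ i ∈ Finset.univ, (∑ j, star (B j i) * B j i : ℂ) = 0 := by
    rw [← Finset.sum_eq_zero_iff_of_nonneg
      (fun i _ => Finset.sum_nonneg fun j _ => star_mul_self_nonneg _)]
    exact h'
  ext j i
  have := (Finset.sum_eq_zero_iff_of_nonneg
    (fun j _ => star_mul_self_nonneg (B j i))).mp (hz i (Finset.mem_univ i)) j (Finset.mem_univ j)
  rw [Complex.star_def, ← Complex.normSq_eq_conj_mul_self] at this
  exact_mod_cast Complex.normSq_eq_zero.mp (by exact_mod_cast this)

/-- For density operators `σ, ρ` with `ρ` invertible (so that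
`supp σ ≤ supp ρ = 1`), the commutant Radon–Nikodym derivative
`d = ρ^{-1/2} σ ρ^{-1/2}` is the unique element satisfying
`Tr(σ a) = Tr(ρ^{1/2} d ρ^{1/2} a)` for all `a`; it is positive semidefinite,
and its operator norm `L` (characterized as the least `μ` with `d ≤ μ•1`) is
the smallest `λ` with `σ ≤ λ•ρ`; moreover `L ≥ 1`, with `L = 1` iff `σ = ρ`. -/
theorem stmt13 {n : Type*} [Fintype n] [DecidableEq n]
    (ρ σ : Matrix n n ℂ) (hρ : ρ.PosDef) (hρ1 : ρ.trace = 1)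
    (hσ : σ.PosSemidef) (hσ1 : σ.trace = 1)
    (d : Matrix n n ℂ)
    (hd : d = (hρ.posSemidef.sqrt)⁻¹ * σ * (hρ.posSemidef.sqrt)⁻¹) :
    (∀ a : Matrix n n ℂ,
      (σ * a).trace = (hρ.posSemidef.sqrt * d * hρ.posSemidef.sqrt * a).trace) ∧
    (∀ d' : Matrix n n ℂ,
      (∀ a : Matrix n n ℂ,
        (σ * a).trace = (hρ.posSemidef.sqrt * d' * hρ.posSemidef.sqrt * a).trace) →
      d' = d) ∧
    d.PosSemidef ∧
    (∃ L : ℝ,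
      IsLeast {lam : ℝ | ((lam : ℂ) • ρ - σ).PosSemidef} L ∧
      IsLeast {mu : ℝ | ((mu : ℂ) • (1 : Matrix n n ℂ) - d).PosSemidef} L ∧
      1 ≤ L ∧ (L = 1 ↔ σ = ρ)) := by
  classical
  set S := hρ.posSemidef.sqrt with hSdef
  have hS : S.PosSemidef := hρ.posSemidef.posSemidef_sqrt
  have hSS : S * S = ρ := hρ.posSemidef.sqrt_mul_self
  have hdet : IsUnit S.det := by
    rw [isUnit_iff_ne_zero]
    intro h
    have h2 : S.det * S.det = ρ.det := by rw [← Matrix.det_mul, hSS]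
    rw [h, mul_zero] at h2
    exact hρ.det_pos.ne' h2.symm
  have hinv1 : S * S⁻¹ = 1 := mul_nonsing_inv S hdet
  have hinv2 : S⁻¹ * S = 1 := nonsing_inv_mul S hdet
  have hSdS : S * d * S = σ := by
    simp only [hd, ← mul_assoc]
    rw [hinv1, one_mul, mul_assoc, hinv2, mul_one]
  have hSH : Sᴴ = S := hS.isHermitian
  have hSiH : (S⁻¹)ᴴ = S⁻¹ := hS.inv.isHermitian
  have hdpsd : d.PosSemidef := by
    have h := hσ.conjTranspose_mul_mul_same S⁻¹
    rw [hSiH] at h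
    rwa [hd]
  refine ⟨fun a => by rw [hSdS], ?_, hdpsd, ?_⟩
  · -- uniqueness
    intro d' h
    have key : (S * d' * S - σ) * (S * d' * S - σ)ᴴ = 0 := by
      apply aux_trace_zero (posSemidef_self_mul_conjTranspose _)
      rw [sub_mul, Matrix.trace_sub, ← h ((S * d' * S - σ)ᴴ), sub_self]
    have h0 : S * d' * S = σ := by
      have := Matrix.self_mul_conjTranspose_eq_zero.mp key
      linear_combination (norm := noncomm_ring) this
    have h1 : S⁻¹ * (S * d' * S) * S⁻¹ = S⁻¹ * (S * d * S) * S⁻¹ := by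
      rw [h0, hSdS]
    simp only [← mul_assoc] at h1
    rw [hinv2, one_mul, one_mul] at h1
    rw [mul_assoc, mul_assoc, hinv1, mul_one, mul_one] at h1
    exact h1
  · -- the L part
    have hn : Nonempty n := by
      by_contra h
      rw [not_nonempty_iff] at h
      rw [Matrix.trace, Finset.univ_eq_empty, Finset.sum_empty] at hρ1
      exact zero_ne_one hρ1
    have hdh := hdpsd.isHermitian
    obtain ⟨i₀, -, hmax⟩ := Finset.exists_max_image Finset.univ hdh.eigenvalues
      ⟨Classical.arbitrary n, Finset.mem_univ _⟩
    set L := hdh.eigenvalues i₀ with hLdef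
    set U : Matrix n n ℂ := (hdh.eigenvectorUnitary : Matrix n n ℂ) with hUdef
    have hU1 : U * star U = 1 := (Matrix.mem_unitaryGroup_iff).mp hdh.eigenvectorUnitary.2
    have hU2 : star U * U = 1 := (Matrix.mem_unitaryGroup_iff').mp hdh.eigenvectorUnitary.2
    -- membership in the d-set iff all eigenvalues are ≤ μ
    have Bmem : ∀ μ : ℝ, ((μ : ℂ) • (1 : Matrix n n ℂ) - d).PosSemidef ↔
        ∀ i, hdh.eigenvalues i ≤ μ := by
      intro μ
      have hdiag : (μ : ℂ) • (1 : Matrix n n ℂ) - d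
          = U * diagonal (fun i => ((μ - hdh.eigenvalues i : ℝ) : ℂ)) * star U := by
        conv_lhs => rw [hdh.spectral_theorem, Unitary.conjStarAlgAut_apply]
        have h1 : (μ : ℂ) • (1 : Matrix n n ℂ) = U * ((μ : ℂ) • 1) * star U := by
          rw [mul_smul_comm, mul_one, smul_mul_assoc, hU1]
        rw [h1, ← Matrix.sub_mul, ← Matrix.mul_sub]
        congr 2
        rw [Matrix.smul_one_eq_diagonal, Matrix.diagonal_sub]
        simp [Function.comp, Complex.ofReal_sub]
      constructor
      · intro h i
        have h2 := h.conjTranspose_mul_mul_same U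
        have h3 : Uᴴ * ((μ : ℂ) • (1 : Matrix n n ℂ) - d) * U
            = diagonal (fun i => ((μ - hdh.eigenvalues i : ℝ) : ℂ)) := by
          rw [hdiag, ← Matrix.star_eq_conjTranspose]
          rw [← mul_assoc, ← mul_assoc, hU2, one_mul, mul_assoc, hU2, mul_one]
        rw [h3] at h2
        have h4 := posSemidef_diagonal_iff.mp h2 i
        rw [← sub_nonneg]
        exact_mod_cast h4
      · intro h
        have hD : (diagonal (fun i => ((μ - hdh.eigenvalues i : ℝ) : ℂ))).PosSemidef := by
          refine posSemidef_diagonal_iff.mpr fun i => ?_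
          have : (0:ℝ) ≤ μ - hdh.eigenvalues i := sub_nonneg.mpr (h i)
          exact_mod_cast this
        rw [hdiag, Matrix.star_eq_conjTranspose]
        exact hD.mul_mul_conjTranspose_same U

    have Amem : ∀ lam : ℝ, ((lam : ℂ) • ρ - σ).PosSemidef ↔
        ((lam : ℂ) • (1 : Matrix n n ℂ) - d).PosSemidef := by
      intro lam
      have hfact : (lam : ℂ) • ρ - σ = S * ((lam : ℂ) • (1 : Matrix n n ℂ) - d) * S := by
        rw [Matrix.mul_sub, Matrix.sub_mul, mul_smul_comm, mul_one, smul_mul_assoc, hSS, hSdS]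
      constructor
      · intro h
        have h2 := h.conjTranspose_mul_mul_same S⁻¹
        rw [hSiH] at h2
        have h3 : S⁻¹ * ((lam : ℂ) • ρ - σ) * S⁻¹ = (lam : ℂ) • (1 : Matrix n n ℂ) - d := by
          rw [hfact, ← mul_assoc, ← mul_assoc, hinv2, one_mul, mul_assoc, hinv1, mul_one]
        rwa [h3] at h2
      · intro h
        have h2 := h.conjTranspose_mul_mul_same S
        rw [hSH] at h2
        rwa [hfact]
    have hLB : ∀ i, hdh.eigenvalues i ≤ L := fun i => hmax i (Finset.mem_univ i)
    have hBL : IsLeast {mu : ℝ | ((mu : ℂ) • (1 : Matrix n n ℂ) - d).PosSemidef} L :=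
      ⟨(Bmem L).mpr hLB, fun μ hμ => (Bmem μ).mp hμ i₀⟩
    have hAL : IsLeast {lam : ℝ | ((lam : ℂ) • ρ - σ).PosSemidef} L :=
      ⟨(Amem L).mpr hBL.1, fun μ hμ => hBL.2 ((Amem μ).mp hμ)⟩
    have htr : ((L : ℂ) • ρ - σ).trace = ((L - 1 : ℝ) : ℂ) := by
      rw [Matrix.trace_sub, Matrix.trace_smul, hρ1, hσ1, smul_eq_mul, mul_one]
      push_cast
      ring
    have h1L : (1:ℝ) ≤ L := by
      have h2 := aux_trace_nonneg hAL.1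
      rw [htr] at h2
      have h3 : (0:ℝ) ≤ L - 1 := by exact_mod_cast h2
      linarith
    refine ⟨L, hAL, hBL, h1L, ?_, ?_⟩
    · intro hL1
      have hps := hAL.1
      have htr2 := htr
      rw [hL1] at hps htr2
      have h0 := aux_trace_zero hps (by rw [htr2]; norm_num)
      have h4 : ρ - σ = 0 := by simpa using h0
      exact (sub_eq_zero.mp h4).symm
    · intro hσρ
      refine le_antisymm (hAL.2 ?_) h1L
      show (((1:ℝ) : ℂ) • ρ - σ).PosSemidef
      rw [hσρ]
      simp only [Complex.ofReal_one, one_smul, sub_self]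
      exact Matrix.PosSemidef.zero
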